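/- Let H be a connected graph with an edge uv, and for positive integers n1, n2 let H(n1;n2) be obtained from H by attaching a pendant path of order n1 at u and a pendant path of order n2 at v (identifying u with an endvertex of P_{n1} and v with an endvertex of P_{n2}). Then N(H(n1;n2)) = n1·n2·N(H)_{u,v} + n1·N(H−v)_u + n2·N(H−u)_v + C(n1,2) + C(n2,2) + N(H−u−v), where C(k,2) is the binomial coefficient k choose 2. -/

import Mathlib

open SimpleGraph

/-- Number of (nonempty) connected induced subgraphs of `G`. -/
noncomputable def numCIS {V : Type*} (G : SimpleGraph V) : ℕ :=
  Nat.card {s : Finset V // s.Nonempty ∧ (G.induce (↑s : Set V)).Connected}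

/-- Number of connected induced subgraphs of `G` containing the vertex `v`. -/
noncomputable def numCISat {V : Type*} (G : SimpleGraph V) (v : V) : ℕ :=
  Nat.card {s : Finset V // v ∈ s ∧ (G.induce (↑s : Set V)).Connected}

/-- Number of connected induced subgraphs of `G` containing both `u` and `v`. -/
noncomputable def numCISat2 {V : Type*} (G : SimpleGraph V) (u v : V) : ℕ :=
  Nat.card {s : Finset V // u ∈ s ∧ v ∈ s ∧ (G.induce (↑s : Set V)).Connected}

/-- Attach a pendant path with `k` new vertices at the vertex `u` of `G`
(so the resulting pendant path "of order `k + 1`" starts at `u`). -/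
def attachPath {V : Type*} (G : SimpleGraph V) (u : V) (k : ℕ) :
    SimpleGraph (V ⊕ Fin k) :=
  SimpleGraph.fromRel (fun a b =>
    (∃ x y, a = Sum.inl x ∧ b = Sum.inl y ∧ G.Adj x y) ∨
    (∃ i j : Fin k, a = Sum.inr i ∧ b = Sum.inr j ∧ (i : ℕ) + 1 = (j : ℕ)) ∨
    (∃ h : 0 < k, a = Sum.inl u ∧ b = Sum.inr ⟨0, h⟩))

section Helpers

variable {V V' : Type*} {G : SimpleGraph V} {G' : SimpleGraph V'}

/-- connected sets are nonempty, so we can drop the nonempty condition -/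
lemma numCIS_eq (G : SimpleGraph V) :
    numCIS G = Nat.card {s : Finset V // (G.induce (↑s : Set V)).Connected} := by
  apply Nat.card_congr
  apply Equiv.subtypeEquivRight
  intro s
  constructor
  · exact fun h => h.2
  · intro h
    refine ⟨?_, h⟩
    have := h.nonempty
    obtain ⟨⟨x, hx⟩⟩ := this
    exact ⟨x, hx⟩

/-- Transfer of induced subgraphs along an adjacency-preserving injection. -/
noncomputable def mapInduceIso (f : V ↪ V') (h : ∀ x y, G.Adj x y ↔ G'.Adj (f x) (f y))
    (s : Finset V) : G.induce (↑s : Set V) ≃g G'.induce (↑(s.map f) : Set V') where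
  toEquiv := (Equiv.Set.image f (↑s) f.injective).trans
    (Equiv.setCongr (Finset.coe_map f s).symm)
  map_rel_iff' := by
    rintro ⟨a, ha⟩ ⟨b, hb⟩
    simp only [Equiv.trans_apply, Equiv.Set.image, Equiv.setCongr, Equiv.Set.imageOfInjOn]
    exact (h a b).symm

lemma connected_induce_map_iff (f : V ↪ V') (h : ∀ x y, G.Adj x y ↔ G'.Adj (f x) (f y))
    (s : Finset V) :
    (G.induce (↑s : Set V)).Connected ↔ (G'.induce (↑(s.map f) : Set V')).Connected :=
  (mapInduceIso f h s).connected_iff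

end Helpers

section Adj

variable {V : Type*} {G : SimpleGraph V} {u : V} {k : ℕ}

def pathRel (G : SimpleGraph V) (u : V) {k : ℕ} : (V ⊕ Fin k) → (V ⊕ Fin k) → Prop
  | .inl x, .inl y => G.Adj x y
  | .inl x, .inr i => x = u ∧ (i : ℕ) = 0
  | .inr i, .inl x => x = u ∧ (i : ℕ) = 0
  | .inr i, .inr j => (i : ℕ) + 1 = j ∨ (j : ℕ) + 1 = i

lemma attachPath_adj {a b : V ⊕ Fin k} :
    (attachPath G u k).Adj a b ↔ pathRel G u a b := by
  rcases a with x | i <;> rcases b with y | j <;>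
    simp only [attachPath, fromRel_adj, pathRel] <;>
    constructor
  · rintro ⟨hne, h | h⟩ <;>
      rcases h with ⟨x', y', hx, hy, hadj⟩ | ⟨_, _, h, _⟩ | ⟨_, h, h'⟩ <;>
      simp_all
    exact hadj.symm
  · intro h
    exact ⟨by simpa using h.ne, Or.inl (Or.inl ⟨x, y, rfl, rfl, h⟩)⟩
  · rintro ⟨hne, h | h⟩ <;>
      rcases h with ⟨x', y', hx, hy, hadj⟩ | ⟨_, _, h, _⟩ | ⟨hk, h, h'⟩ <;>
      simp_all [Fin.ext_iff]
  · rintro ⟨rfl, hj⟩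
    have hk : 0 < k := j.pos
    refine ⟨by simp, Or.inl (Or.inr (Or.inr ⟨hk, rfl, ?_⟩))⟩
    simp [Fin.ext_iff, hj.symm]
  · rintro ⟨hne, h | h⟩ <;>
      rcases h with ⟨x', y', hx, hy, hadj⟩ | ⟨_, _, h, _⟩ | ⟨hk, h, h'⟩ <;>
      simp_all [Fin.ext_iff]
  · rintro ⟨rfl, hi⟩
    have hk : 0 < k := i.pos
    refine ⟨by simp, Or.inr (Or.inr (Or.inr ⟨hk, rfl, ?_⟩))⟩
    simp [Fin.ext_iff, hi.symm]
  · rintro ⟨hne, h | h⟩ <;>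
      rcases h with ⟨x', y', hx, hy, hadj⟩ | ⟨i', j', hx, hy, hij⟩ | ⟨hk, h, h'⟩ <;>
      simp_all
  · rintro (h | h)
    · exact ⟨by simp [Fin.ext_iff]; omega, Or.inl (Or.inr (Or.inl ⟨i, j, rfl, rfl, h⟩))⟩
    · exact ⟨by simp [Fin.ext_iff]; omega, Or.inr (Or.inr (Or.inl ⟨j, i, rfl, rfl, h⟩))⟩

end Adj

section Congr

variable {V V' : Type*} {G : SimpleGraph V} {G' : SimpleGraph V'}

lemma conn_congr (e : G ≃g G') (s : Finset V) :
    (G.induce (↑s : Set V)).Connected ↔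
      (G'.induce (↑(s.map e.toEquiv.toEmbedding) : Set V')).Connected :=
  connected_induce_map_iff e.toEquiv.toEmbedding (fun x y => (e.map_adj_iff).symm) s

lemma iso_symm_apply (e : G ≃g G') (v : V) : e.toEquiv.symm (e v) = v :=
  e.toEquiv.symm_apply_apply v

lemma numCIS_congr (e : G ≃g G') : numCIS G = numCIS G' := by
  rw [numCIS_eq, numCIS_eq]
  apply Nat.card_congr
  exact (e.toEquiv.finsetCongr.subtypeEquiv fun s => by
    rw [Equiv.finsetCongr_apply]; exact conn_congr e s)

lemma numCISat_congr (e : G ≃g G') (v : V) : numCISat G v = numCISat G' (e v) := by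
  apply Nat.card_congr
  exact (e.toEquiv.finsetCongr.subtypeEquiv fun s => by
    rw [Equiv.finsetCongr_apply]
    exact and_congr (by simp [Finset.mem_map_equiv, iso_symm_apply]) (conn_congr e s))

lemma numCISat2_congr (e : G ≃g G') (v w : V) :
    numCISat2 G v w = numCISat2 G' (e v) (e w) := by
  apply Nat.card_congr
  exact (e.toEquiv.finsetCongr.subtypeEquiv fun s => by
    rw [Equiv.finsetCongr_apply]
    exact and_congr (by simp [Finset.mem_map_equiv, iso_symm_apply]) (and_congr (by simp [Finset.mem_map_equiv, iso_symm_apply]) (conn_congr e s)))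

lemma numCISat2_comm (G : SimpleGraph V) (v w : V) :
    numCISat2 G v w = numCISat2 G w v := by
  apply Nat.card_congr
  exact Equiv.subtypeEquivRight fun s => by tauto

end Congr

section Pendant

variable {V : Type*} {G : SimpleGraph V} {u : V}

/-- The embedding of `V` into `V ⊕ Fin 1`. -/
def inlE (V : Type*) (k : ℕ) : V ↪ (V ⊕ Fin k) := ⟨Sum.inl, Sum.inl_injective⟩

lemma adj_inl_iff {k : ℕ} (x y : V) :
    (attachPath G u k).Adj (Sum.inl x) (Sum.inl y) ↔ G.Adj x y := by
  rw [attachPath_adj]; rfl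

lemma adj_pendant {a : V ⊕ Fin 1} (h : (attachPath G u 1).Adj a (Sum.inr 0)) :
    a = Sum.inl u := by
  rw [attachPath_adj] at h
  rcases a with x | i
  · obtain ⟨rfl, -⟩ := h; rfl
  · exfalso
    have hi : (i : ℕ) = 0 := by omega
    have h0 : ((0 : Fin 1) : ℕ) = 0 := rfl
    rcases h with h | h <;> omega

/-- Removing the pendant vertex from a connected induced subgraph keeps it connected. -/
lemma reach_avoid (s : Finset (V ⊕ Fin 1)) :
    ∀ (n : ℕ) (x y : ↥(↑s : Set (V ⊕ Fin 1)))
      (w : ((attachPath G u 1).induce (↑s : Set (V ⊕ Fin 1))).Walk x y),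
      w.length ≤ n → ∀ (hx : x.val ≠ Sum.inr 0) (hy : y.val ≠ Sum.inr 0),
      ((attachPath G u 1).induce ((↑s : Set (V ⊕ Fin 1)) \ {Sum.inr 0})).Reachable
        ⟨x.val, ⟨x.2, hx⟩⟩ ⟨y.val, ⟨y.2, hy⟩⟩ := by
  intro n
  induction n with
  | zero =>
    intro x y w hw hx hy
    cases w with
    | nil => exact Reachable.refl _
    | cons h w' => simp at hw
  | succ n ih =>
    intro x y w hw hx hy
    cases w with
    | nil => exact Reachable.refl _
    | @cons _ z _ h w' =>
      by_cases hz : z.val = Sum.inr 0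
      · -- next vertex is the pendant vertex
        cases w' with
        | nil => exact absurd hz hy
        | @cons _ z2 _ h2 w'' =>
          -- x and z2 are both `inl u`
          have hadj1 : (attachPath G u 1).Adj x.val (Sum.inr 0) := by
            have : (attachPath G u 1).Adj x.val z.val := h
            rwa [hz] at this
          have hadj2 : (attachPath G u 1).Adj z2.val (Sum.inr 0) := by
            have : (attachPath G u 1).Adj z.val z2.val := h2
            rw [hz] at this
            exact this.symm
          have hxu : x.val = Sum.inl u := adj_pendant hadj1
          have hz2u : z2.val = Sum.inl u := adj_pendant hadj2
          have heq : x = z2 := Subtype.ext (hxu.trans hz2u.symm)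
          subst heq
          exact ih x y w'' (by simp at hw; omega) hx hy
      · have h1 : ((attachPath G u 1).induce ((↑s : Set (V ⊕ Fin 1)) \ {Sum.inr 0})).Adj
            ⟨x.val, ⟨x.2, hx⟩⟩ ⟨z.val, ⟨z.2, hz⟩⟩ := h
        have h2 := ih z y w' (by simp at hw; omega) hz hy
        exact (Adj.reachable h1).trans h2



lemma conn_sdiff_pendant {s : Finset (V ⊕ Fin 1)}
    (hc : ((attachPath G u 1).induce (↑s : Set (V ⊕ Fin 1))).Connected)
    (hne : ((↑s : Set (V ⊕ Fin 1)) \ {Sum.inr 0}).Nonempty) :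
    ((attachPath G u 1).induce ((↑s : Set (V ⊕ Fin 1)) \ {Sum.inr 0})).Connected := by
  rw [connected_iff]
  constructor
  · intro a b
    obtain ⟨av, ha⟩ := a
    obtain ⟨bv, hb⟩ := b
    have hr := hc.preconnected ⟨av, ha.1⟩ ⟨bv, hb.1⟩
    obtain ⟨w⟩ := hr
    have := reach_avoid s w.length ⟨av, ha.1⟩ ⟨bv, hb.1⟩ w le_rfl ha.2 hb.2
    exact this
  · obtain ⟨x, hx⟩ := hne
    exact ⟨⟨x, hx⟩⟩

lemma pendant_mem_inl_u {s : Finset (V ⊕ Fin 1)}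
    (hc : ((attachPath G u 1).induce (↑s : Set (V ⊕ Fin 1))).Connected)
    (hp : Sum.inr 0 ∈ s) {a : V ⊕ Fin 1} (ha : a ∈ s) (hane : a ≠ Sum.inr 0) :
    Sum.inl u ∈ s := by
  have hr := hc.preconnected ⟨a, ha⟩ ⟨Sum.inr 0, hp⟩
  obtain ⟨w⟩ := hr
  have := w.exists_boundary_dart {z : ↥(↑s : Set (V ⊕ Fin 1)) | z.val ≠ Sum.inr 0}
    hane (by simp)
  obtain ⟨d, hd, hfst, hsnd⟩ := this
  simp only [Set.mem_setOf_eq, not_not] at hfst hsnd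
  have hadj : (attachPath G u 1).Adj d.fst.val d.snd.val := d.adj
  rw [hsnd] at hadj
  have := adj_pendant hadj
  rw [← this]
  exact d.fst.2

end Pendant

section ExtSet

variable {V : Type*} {G : SimpleGraph V} {u : V}

open scoped Classical in
/-- The subset of `V ⊕ Fin 1` determined by a subset of `V` and whether the pendant
vertex is included. -/
noncomputable def extSet (A : Finset V) (b : Bool) : Finset (V ⊕ Fin 1) :=
  (A.map (inlE V 1)) ∪ (if b then {Sum.inr 0} else ∅)

@[simp] lemma mem_extSet_inl {A : Finset V} {b : Bool} {x : V} :
    Sum.inl x ∈ extSet A b ↔ x ∈ A := by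
  classical
  simp [extSet, inlE]
  cases b <;> simp

@[simp] lemma mem_extSet_inr {A : Finset V} {b : Bool} {i : Fin 1} :
    Sum.inr i ∈ extSet A b ↔ b = true := by
  classical
  simp [extSet, inlE]
  cases b <;> simp [Subsingleton.elim i 0]

open scoped Classical in
/-- Finsets of `V ⊕ Fin 1` are in bijection with pairs of a finset of `V` and a boolean. -/
noncomputable def finsetSumFinOneEquiv (V : Type*) :
    Finset (V ⊕ Fin 1) ≃ Finset V × Bool where
  toFun s := (s.preimage Sum.inl Sum.inl_injective.injOn, decide (Sum.inr 0 ∈ s))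
  invFun x := extSet x.1 x.2
  left_inv s := by
    ext a
    rcases a with x | i
    · simp [Finset.mem_preimage]
    · simp [Subsingleton.elim i 0]
  right_inv x := by
    obtain ⟨A, b⟩ := x
    refine Prod.ext ?_ ?_
    · ext a
      simp [Finset.mem_preimage]
    · cases b <;> simp

/-- Split a subtype of a product with `Bool` into two subtypes. -/
def boolSplit {α : Type*} (P : α × Bool → Prop) :
    {x : α × Bool // P x} ≃ {a : α // P (a, false)} ⊕ {a : α // P (a, true)} where
  toFun x := match x with
    | ⟨(a, false), h⟩ => .inl ⟨a, h⟩
    | ⟨(a, true), h⟩ => .inr ⟨a, h⟩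
  invFun x := match x with
    | .inl ⟨a, h⟩ => ⟨(a, false), h⟩
    | .inr ⟨a, h⟩ => ⟨(a, true), h⟩
  left_inv := by rintro ⟨⟨a, _ | _⟩, h⟩ <;> rfl
  right_inv := by rintro (⟨a, h⟩ | ⟨a, h⟩) <;> rfl

/-- Master counting lemma for graphs with one extra vertex. -/
lemma card_split [Finite V] (P : Finset (V ⊕ Fin 1) → Prop) (Q1 Q2 : Finset V → Prop)
    (h1 : ∀ A, P (extSet A false) ↔ Q1 A) (h2 : ∀ A, P (extSet A true) ↔ Q2 A) :
    Nat.card {s // P s} = Nat.card {A // Q1 A} + Nat.card {A // Q2 A} := by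
  haveI := Fintype.ofFinite V
  haveI : DecidableEq V := Classical.decEq V
  have e1 : {s // P s} ≃ {x : Finset V × Bool // P (extSet x.1 x.2)} :=
    (finsetSumFinOneEquiv V).subtypeEquiv fun s =>
      iff_of_eq (congrArg P ((finsetSumFinOneEquiv V).left_inv s).symm)
  have e2 := boolSplit (fun x : Finset V × Bool => P (extSet x.1 x.2))
  rw [Nat.card_congr (e1.trans e2), Nat.card_sum]
  congr 1
  · exact Nat.card_congr (Equiv.subtypeEquivRight fun A => h1 A)
  · exact Nat.card_congr (Equiv.subtypeEquivRight fun A => h2 A)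

end ExtSet

section Char

variable {V : Type*} {G : SimpleGraph V} {u : V}

lemma conn_singleton (G : SimpleGraph V) (v : V) : (G.induce {v}).Connected := by
  rw [connected_iff]
  refine ⟨fun a b => ?_, ⟨⟨v, rfl⟩⟩⟩
  have : a = b := Subtype.ext (a.2.trans b.2.symm)
  rw [this]

lemma extSet_false_eq (A : Finset V) : extSet A false = A.map (inlE V 1) := by
  classical
  simp [extSet]

lemma coe_extSet_true (A : Finset V) :
    (↑(extSet A true) : Set (V ⊕ Fin 1)) = ↑(A.map (inlE V 1)) ∪ {Sum.inr 0} := by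
  classical
  simp [extSet]

lemma conn_extSet_false (A : Finset V) :
    ((attachPath G u 1).induce (↑(extSet A false) : Set (V ⊕ Fin 1))).Connected ↔
      (G.induce (↑A : Set V)).Connected := by
  rw [extSet_false_eq]
  exact (connected_induce_map_iff (inlE V 1) (fun x y => (adj_inl_iff x y).symm) A).symm

lemma conn_extSet_true (A : Finset V) :
    ((attachPath G u 1).induce (↑(extSet A true) : Set (V ⊕ Fin 1))).Connected ↔
      (A = ∅ ∨ (u ∈ A ∧ (G.induce (↑A : Set V)).Connected)) := by
  constructor
  · intro h
    by_cases hA : A = ∅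
    · exact Or.inl hA
    · obtain ⟨a, ha⟩ := Finset.nonempty_iff_ne_empty.2 hA
      refine Or.inr ⟨?_, ?_⟩
      · have := pendant_mem_inl_u h (by simp) (a := Sum.inl a) (by simp [ha]) (by simp)
        simpa using this
      · have hne : ((↑(extSet A true) : Set (V ⊕ Fin 1)) \ {Sum.inr 0}).Nonempty :=
          ⟨Sum.inl a, by simp [ha]⟩
        have hc := conn_sdiff_pendant h hne
        have hset : (↑(extSet A true) : Set (V ⊕ Fin 1)) \ {Sum.inr 0}
            = ↑(A.map (inlE V 1)) := by
          rw [coe_extSet_true]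
          ext z
          rcases z with x | i
          · simp [inlE]
          · simp [Subsingleton.elim i 0, inlE]
        rw [hset] at hc
        exact (connected_induce_map_iff (inlE V 1) (fun x y => (adj_inl_iff x y).symm) A).mpr hc
  · rintro (rfl | ⟨hu, hc⟩)
    · have : (↑(extSet (∅ : Finset V) true) : Set (V ⊕ Fin 1)) = {Sum.inr 0} := by
        rw [coe_extSet_true]; simp
      rw [this]
      exact conn_singleton _ _
    · have hc' := (connected_induce_map_iff (inlE V 1)
        (fun x y => (adj_inl_iff (G := G) (u := u) x y).symm) A).mp hc
      rw [coe_extSet_true]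
      refine connected_induce_union hc'.preconnected (conn_singleton _ _).preconnected (v := Sum.inl u)
        (w := Sum.inr 0) (by simp [inlE, hu]) rfl ?_
      rw [attachPath_adj]
      exact ⟨rfl, rfl⟩

end Char

section Count1

variable {V : Type*} [Finite V] {G : SimpleGraph V} {u : V}

lemma card_or_left_eq {α : Type*} [Finite α] (a₀ : α) (R : α → Prop) (hR : ¬ R a₀) :
    Nat.card {A : α // A = a₀ ∨ R A} = 1 + Nat.card {A // R A} := by
  classical
  haveI := Fintype.ofFinite α
  have e : {A : α // A = a₀ ∨ R A} ≃ Unit ⊕ {A // R A} := {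
    toFun := fun x => if h : R x.1 then .inr ⟨x.1, h⟩ else .inl Unit.unit
    invFun := fun x => match x with
      | .inl _ => ⟨a₀, Or.inl rfl⟩
      | .inr ⟨A, h⟩ => ⟨A, Or.inr h⟩
    left_inv := by
      rintro ⟨A, rfl | h⟩
      · simp [hR]
      · simp [h]
    right_inv := by
      rintro (⟨⟩ | ⟨A, h⟩)
      · simp [hR]
      · simp [h] }
  rw [Nat.card_congr e, Nat.card_sum]
  simp

lemma numCIS_attachOne (G : SimpleGraph V) (u : V) :
    numCIS (attachPath G u 1) = numCIS G + numCISat G u + 1 := by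
  classical
  haveI := Fintype.ofFinite V
  rw [numCIS_eq, numCIS_eq]
  rw [card_split (fun s => ((attachPath G u 1).induce (↑s : Set (V ⊕ Fin 1))).Connected)
    (fun A => (G.induce (↑A : Set V)).Connected)
    (fun A => A = ∅ ∨ (u ∈ A ∧ (G.induce (↑A : Set V)).Connected))
    (fun A => conn_extSet_false A) (fun A => conn_extSet_true A)]
  rw [card_or_left_eq ∅ _ (by simp)]
  unfold numCISat
  omega

lemma numCISat_attachOne_pendant (G : SimpleGraph V) (u : V) :
    numCISat (attachPath G u 1) (Sum.inr 0) = numCISat G u + 1 := by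
  classical
  haveI := Fintype.ofFinite V
  unfold numCISat
  rw [card_split (fun s => Sum.inr 0 ∈ s ∧
      ((attachPath G u 1).induce (↑s : Set (V ⊕ Fin 1))).Connected)
    (fun _ => False)
    (fun A => A = ∅ ∨ (u ∈ A ∧ (G.induce (↑A : Set V)).Connected))
    (fun A => by rw [conn_extSet_false]; simp)
    (fun A => by rw [show ((Sum.inr 0 : V ⊕ Fin 1) ∈ extSet A true) = True by simp,
      conn_extSet_true]; simp)]
  rw [card_or_left_eq ∅ _ (by simp)]
  haveI : IsEmpty {A : Finset V // False} := ⟨fun x => x.2⟩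
  rw [Nat.card_of_isEmpty, Nat.zero_add]
  omega

lemma numCISat_attachOne_inl (G : SimpleGraph V) (u w : V) :
    numCISat (attachPath G u 1) (Sum.inl w) = numCISat G w + numCISat2 G u w := by
  classical
  haveI := Fintype.ofFinite V
  unfold numCISat numCISat2
  rw [card_split (fun s => Sum.inl w ∈ s ∧
      ((attachPath G u 1).induce (↑s : Set (V ⊕ Fin 1))).Connected)
    (fun A => w ∈ A ∧ (G.induce (↑A : Set V)).Connected)
    (fun A => u ∈ A ∧ w ∈ A ∧ (G.induce (↑A : Set V)).Connected)
    (fun A => by rw [conn_extSet_false, mem_extSet_inl])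
    (fun A => by
      rw [conn_extSet_true, mem_extSet_inl]
      constructor
      · rintro ⟨hw, rfl | ⟨hu, hc⟩⟩
        · simp at hw
        · exact ⟨hu, hw, hc⟩
      · rintro ⟨hu, hw, hc⟩
        exact ⟨hw, Or.inr ⟨hu, hc⟩⟩)]

lemma numCISat2_attachOne_pendant (G : SimpleGraph V) (u w : V) :
    numCISat2 (attachPath G u 1) (Sum.inl w) (Sum.inr 0) = numCISat2 G u w := by
  classical
  haveI := Fintype.ofFinite V
  unfold numCISat2
  rw [card_split (fun s => Sum.inl w ∈ s ∧ Sum.inr 0 ∈ s ∧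
      ((attachPath G u 1).induce (↑s : Set (V ⊕ Fin 1))).Connected)
    (fun _ => False)
    (fun A => u ∈ A ∧ w ∈ A ∧ (G.induce (↑A : Set V)).Connected)
    (fun A => by rw [conn_extSet_false]; simp)
    (fun A => by
      rw [conn_extSet_true, mem_extSet_inl]
      simp only [mem_extSet_inr, true_and]
      constructor
      · rintro ⟨hw, rfl | ⟨hu, hc⟩⟩
        · simp at hw
        · exact ⟨hu, hw, hc⟩
      · rintro ⟨hu, hw, hc⟩
        exact ⟨hw, Or.inr ⟨hu, hc⟩⟩)]
  haveI : IsEmpty {A : Finset V // False} := ⟨fun x => x.2⟩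
  rw [Nat.card_of_isEmpty, Nat.zero_add]

end Count1

section Isos

variable {V : Type*}

def attachZeroIso (G : SimpleGraph V) (u : V) : attachPath G u 0 ≃g G where
  toEquiv := Equiv.sumEmpty V (Fin 0)
  map_rel_iff' := by
    rintro (x | i) (y | j)
    · exact (adj_inl_iff x y).symm
    · exact j.elim0
    · exact i.elim0
    · exact i.elim0

def splitEquiv (V : Type*) (k : ℕ) : (V ⊕ Fin (k + 1)) ≃ ((V ⊕ Fin 1) ⊕ Fin k) where
  toFun a := match a with
    | .inl x => .inl (.inl x)
    | .inr i => if h : (i : ℕ) = 0 then .inl (.inr 0) else .inr ⟨(i : ℕ) - 1, by omega⟩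
  invFun a := match a with
    | .inl (.inl x) => .inl x
    | .inl (.inr _) => .inr 0
    | .inr i => .inr ⟨(i : ℕ) + 1, by omega⟩
  left_inv a := by
    rcases a with x | i
    · rfl
    · dsimp only
      split_ifs with h
      · exact congrArg Sum.inr (Fin.ext (by simp [h])).symm
      · exact congrArg Sum.inr (Fin.ext (by simp; omega))
  right_inv a := by
    rcases a with (x | i) | i
    · rfl
    · simp [Subsingleton.elim i 0]
    · have : (i : ℕ) + 1 ≠ 0 := by omega
      simp [this]

def attachSuccIso (G : SimpleGraph V) (u : V) (k : ℕ) :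
    attachPath G u (k + 1) ≃g attachPath (attachPath G u 1) (Sum.inr 0) k where
  toEquiv := splitEquiv V k
  map_rel_iff' := by
    intro a b
    show (attachPath (attachPath G u 1) (Sum.inr 0) k).Adj
      (splitEquiv V k a) (splitEquiv V k b) ↔ _
    rw [attachPath_adj, attachPath_adj]
    rcases a with x | i <;> rcases b with y | j
    · show pathRel _ _ (Sum.inl (Sum.inl x)) (Sum.inl (Sum.inl y)) ↔ _
      show (attachPath G u 1).Adj (Sum.inl x) (Sum.inl y) ↔ _
      rw [adj_inl_iff]
      rfl
    · by_cases hj : (j : ℕ) = 0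
      · have : splitEquiv V k (Sum.inr j) = Sum.inl (Sum.inr 0) := by simp [splitEquiv, -Fin.val_eq_zero_iff, Fin.ext_iff, hj]
        rw [this]
        show (attachPath G u 1).Adj (Sum.inl x) (Sum.inr 0) ↔ pathRel G u _ _
        rw [attachPath_adj]
        show (x = u ∧ ((0 : Fin 1) : ℕ) = 0) ↔ (x = u ∧ (j : ℕ) = 0)
        simp [hj]
      · have : splitEquiv V k (Sum.inr j) = Sum.inr ⟨(j : ℕ) - 1, by omega⟩ := by
          simp [splitEquiv, -Fin.val_eq_zero_iff, Fin.ext_iff, hj]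
        rw [this]
        show (Sum.inl x = Sum.inr 0 ∧ _) ↔ (x = u ∧ (j : ℕ) = 0)
        simp [hj]
    · by_cases hi : (i : ℕ) = 0
      · have : splitEquiv V k (Sum.inr i) = Sum.inl (Sum.inr 0) := by simp [splitEquiv, -Fin.val_eq_zero_iff, Fin.ext_iff, hi]
        rw [this]
        show (attachPath G u 1).Adj (Sum.inr 0) (Sum.inl y) ↔ pathRel G u _ _
        rw [attachPath_adj]
        show (y = u ∧ ((0 : Fin 1) : ℕ) = 0) ↔ (y = u ∧ (i : ℕ) = 0)
        simp [hi]
      · have : splitEquiv V k (Sum.inr i) = Sum.inr ⟨(i : ℕ) - 1, by omega⟩ := by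
          simp [splitEquiv, -Fin.val_eq_zero_iff, Fin.ext_iff, hi]
        rw [this]
        show (Sum.inl y = Sum.inr 0 ∧ _) ↔ (y = u ∧ (i : ℕ) = 0)
        simp [hi]
    · by_cases hi : (i : ℕ) = 0 <;> by_cases hj : (j : ℕ) = 0
      · have e1 : splitEquiv V k (Sum.inr i) = Sum.inl (Sum.inr 0) := by simp [splitEquiv, -Fin.val_eq_zero_iff, Fin.ext_iff, hi]
        have e2 : splitEquiv V k (Sum.inr j) = Sum.inl (Sum.inr 0) := by simp [splitEquiv, -Fin.val_eq_zero_iff, Fin.ext_iff, hj]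
        rw [e1, e2]
        show (attachPath G u 1).Adj (Sum.inr 0) (Sum.inr 0) ↔ _
        rw [attachPath_adj]
        show (((0:Fin 1):ℕ) + 1 = ((0:Fin 1):ℕ) ∨ ((0:Fin 1):ℕ) + 1 = ((0:Fin 1):ℕ)) ↔
          ((i : ℕ) + 1 = (j : ℕ) ∨ (j : ℕ) + 1 = (i : ℕ))
        simp [hi, hj]
      · have e1 : splitEquiv V k (Sum.inr i) = Sum.inl (Sum.inr 0) := by simp [splitEquiv, -Fin.val_eq_zero_iff, Fin.ext_iff, hi]
        have e2 : splitEquiv V k (Sum.inr j) = Sum.inr ⟨(j : ℕ) - 1, by omega⟩ := by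
          simp [splitEquiv, -Fin.val_eq_zero_iff, Fin.ext_iff, hj]
        rw [e1, e2]
        show (Sum.inr 0 = Sum.inr 0 ∧ ((⟨(j : ℕ) - 1, by omega⟩ : Fin k) : ℕ) = 0) ↔
          ((i : ℕ) + 1 = (j : ℕ) ∨ (j : ℕ) + 1 = (i : ℕ))
        simp only [true_and]
        constructor
        · intro h; left; omega
        · rintro (h | h) <;> omega
      · have e1 : splitEquiv V k (Sum.inr i) = Sum.inr ⟨(i : ℕ) - 1, by omega⟩ := by
          simp [splitEquiv, -Fin.val_eq_zero_iff, Fin.ext_iff, hi]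
        have e2 : splitEquiv V k (Sum.inr j) = Sum.inl (Sum.inr 0) := by simp [splitEquiv, -Fin.val_eq_zero_iff, Fin.ext_iff, hj]
        rw [e1, e2]
        show (Sum.inr 0 = Sum.inr 0 ∧ ((⟨(i : ℕ) - 1, by omega⟩ : Fin k) : ℕ) = 0) ↔
          ((i : ℕ) + 1 = (j : ℕ) ∨ (j : ℕ) + 1 = (i : ℕ))
        simp only [true_and]
        constructor
        · intro h; right; omega
        · rintro (h | h) <;> omega
      · have e1 : splitEquiv V k (Sum.inr i) = Sum.inr ⟨(i : ℕ) - 1, by omega⟩ := by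
          simp [splitEquiv, -Fin.val_eq_zero_iff, Fin.ext_iff, hi]
        have e2 : splitEquiv V k (Sum.inr j) = Sum.inr ⟨(j : ℕ) - 1, by omega⟩ := by
          simp [splitEquiv, -Fin.val_eq_zero_iff, Fin.ext_iff, hj]
        rw [e1, e2]
        show (((i : ℕ) - 1) + 1 = ((j : ℕ) - 1) ∨ ((j : ℕ) - 1) + 1 = ((i : ℕ) - 1)) ↔
          ((i : ℕ) + 1 = (j : ℕ) ∨ (j : ℕ) + 1 = (i : ℕ))
        constructor
        · rintro (h | h)
          · left; omega
          · right; omega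
        · rintro (h | h)
          · left; omega
          · right; omega

end Isos

section MainInduction

lemma numCISat_attachPath : ∀ (k : ℕ) {V : Type*} [Finite V] (G : SimpleGraph V) (u w : V),
    numCISat (attachPath G u k) (Sum.inl w) = numCISat G w + k * numCISat2 G u w := by
  intro k
  induction k with
  | zero =>
    intro V _ G u w
    rw [numCISat_congr (attachZeroIso G u) (Sum.inl w)]
    rw [show (attachZeroIso G u) (Sum.inl w) = w from rfl]
    simp
  | succ k ih =>
    intro V _ G u w
    rw [numCISat_congr (attachSuccIso G u k) (Sum.inl w)]
    rw [show (attachSuccIso G u k) (Sum.inl w) = Sum.inl (Sum.inl w) from rfl]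
    rw [ih (attachPath G u 1) (Sum.inr 0) (Sum.inl w)]
    rw [numCISat_attachOne_inl, numCISat2_comm _ (Sum.inr 0) (Sum.inl w),
      numCISat2_attachOne_pendant]
    ring

lemma numCIS_attachPath : ∀ (k : ℕ) {V : Type*} [Finite V] (G : SimpleGraph V) (u : V),
    numCIS (attachPath G u k) = numCIS G + k * numCISat G u + (k + 1).choose 2 := by
  intro k
  induction k with
  | zero =>
    intro V _ G u
    rw [numCIS_congr (attachZeroIso G u)]
    simp
  | succ k ih =>
    intro V _ G u
    rw [numCIS_congr (attachSuccIso G u k)]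
    rw [ih (attachPath G u 1) (Sum.inr 0)]
    rw [numCIS_attachOne, numCISat_attachOne_pendant]
    have hch : (k + 1 + 1).choose 2 = (k + 1).choose 2 + (k + 1) := by
      rw [Nat.choose_succ_succ]
      simp [Nat.choose_one_right]
      omega
    rw [hch]
    ring

end MainInduction

section Avoid

variable {V : Type*}

lemma card_split_prop {α : Type*} [Finite α] (P Q : α → Prop) :
    Nat.card {a // P a} = Nat.card {a // Q a ∧ P a} + Nat.card {a // ¬Q a ∧ P a} := by
  classical
  haveI := Fintype.ofFinite α
  have e : {a // P a} ≃ {a // Q a ∧ P a} ⊕ {a // ¬Q a ∧ P a} := {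
    toFun := fun x => if h : Q x.1 then .inl ⟨x.1, h, x.2⟩ else .inr ⟨x.1, h, x.2⟩
    invFun := fun x => match x with
      | .inl ⟨a, _, h⟩ => ⟨a, h⟩
      | .inr ⟨a, _, h⟩ => ⟨a, h⟩
    left_inv := by
      rintro ⟨a, h⟩
      by_cases hq : Q a <;> simp [hq]
    right_inv := by
      rintro (⟨a, hq, h⟩ | ⟨a, hq, h⟩) <;> simp [hq] }
  rw [Nat.card_congr e, Nat.card_sum]

open scoped Classical in
noncomputable def avoidEquiv (G : SimpleGraph V) (w : V)
    (P : Finset V → Prop) (P' : Finset ↥({w}ᶜ : Set V) → Prop)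
    (hP : ∀ t : Finset ↥({w}ᶜ : Set V),
      P (t.map (Function.Embedding.subtype _)) ↔ P' t) :
    {s : Finset V // w ∉ s ∧ P s ∧ (G.induce (↑s : Set V)).Connected} ≃
    {t : Finset ↥({w}ᶜ : Set V) // P' t ∧
      ((G.induce ({w}ᶜ : Set V)).induce (↑t : Set ↥({w}ᶜ : Set V))).Connected} := by
  have hconn : ∀ t : Finset ↥({w}ᶜ : Set V),
      ((G.induce ({w}ᶜ : Set V)).induce (↑t : Set ↥({w}ᶜ : Set V))).Connected ↔
      (G.induce (↑(t.map (Function.Embedding.subtype _)) : Set V)).Connected :=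
    fun t => connected_induce_map_iff (Function.Embedding.subtype _) (fun x y => Iff.rfl) t
  have hmapsub : ∀ s : Finset V, w ∉ s →
      (s.subtype (· ∈ ({w}ᶜ : Set V))).map (Function.Embedding.subtype _) = s := by
    intro s hws
    rw [Finset.subtype_map]
    apply Finset.filter_true_of_mem
    intro x hx
    simp only [Set.mem_compl_iff, Set.mem_singleton_iff]
    rintro rfl
    exact hws hx
  have hsubmap : ∀ t : Finset ↥({w}ᶜ : Set V),
      ((t.map (Function.Embedding.subtype _)).subtype (· ∈ ({w}ᶜ : Set V))) = t := by
    intro t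
    ext ⟨x, hx⟩
    simp only [Finset.mem_subtype, Finset.mem_map, Function.Embedding.coe_subtype]
    constructor
    · rintro ⟨⟨y, hy⟩, hmem, heq⟩
      have : (⟨y, hy⟩ : ↥({w}ᶜ : Set V)) = ⟨x, hx⟩ := Subtype.ext heq
      rwa [this] at hmem
    · intro h
      exact ⟨⟨x, hx⟩, h, rfl⟩
  have hwnotmem : ∀ t : Finset ↥({w}ᶜ : Set V),
      w ∉ t.map (Function.Embedding.subtype _) := by
    intro t hw
    simp only [Finset.mem_map, Function.Embedding.coe_subtype] at hw
    obtain ⟨⟨y, hy⟩, -, heq⟩ := hw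
    exact hy heq
  refine {
    toFun := fun s => ⟨s.1.subtype (· ∈ ({w}ᶜ : Set V)), ?_, ?_⟩
    invFun := fun t => ⟨t.1.map (Function.Embedding.subtype _), hwnotmem t.1, ?_, ?_⟩
    left_inv := ?_
    right_inv := ?_ }
  · rw [← hP _, hmapsub s.1 s.2.1]; exact s.2.2.1
  · rw [hconn, hmapsub s.1 s.2.1]; exact s.2.2.2
  · rw [hP]; exact t.2.1
  · rw [← hconn]; exact t.2.2
  · rintro ⟨s, hw, hs⟩
    exact Subtype.ext (hmapsub s hw)
  · rintro ⟨t, ht⟩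
    exact Subtype.ext (hsubmap t)

lemma numCIS_avoid [Finite V] (G : SimpleGraph V) (w : V) :
    numCIS G = numCISat G w + numCIS (G.induce ({w}ᶜ : Set V)) := by
  classical
  haveI := Fintype.ofFinite V
  rw [numCIS_eq G]
  refine Eq.trans (card_split_prop (fun s : Finset V => (G.induce (↑s : Set V)).Connected)
    (fun s => w ∈ s)) ?_
  congr 1
  rw [numCIS_eq]
  refine Nat.card_congr ((Equiv.subtypeEquivRight (fun s : Finset V => ?_)).trans
    ((avoidEquiv G w (fun _ => True) (fun _ => True) (fun _ => Iff.rfl)).trans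
    (Equiv.subtypeEquivRight fun t => ?_)))
  · tauto
  · tauto

lemma numCISat_avoid [Finite V] (G : SimpleGraph V) (x w : V) (hx : x ∈ ({w}ᶜ : Set V)) :
    numCISat G x = numCISat2 G x w + numCISat (G.induce ({w}ᶜ : Set V)) ⟨x, hx⟩ := by
  classical
  haveI := Fintype.ofFinite V
  unfold numCISat numCISat2
  refine Eq.trans (card_split_prop
    (fun s : Finset V => x ∈ s ∧ (G.induce (↑s : Set V)).Connected) (fun s => w ∈ s)) ?_
  congr 1
  · exact Nat.card_congr (Equiv.subtypeEquivRight fun s => by tauto)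
  · have hPmem : ∀ t : Finset ↥({w}ᶜ : Set V),
        x ∈ t.map (Function.Embedding.subtype _) ↔ (⟨x, hx⟩ : ↥({w}ᶜ : Set V)) ∈ t := by
      intro t
      simp only [Finset.mem_map, Function.Embedding.coe_subtype]
      constructor
      · rintro ⟨⟨y, hy⟩, hmem, heq⟩
        have : (⟨y, hy⟩ : ↥({w}ᶜ : Set V)) = ⟨x, hx⟩ := Subtype.ext heq
        rwa [this] at hmem
      · intro h
        exact ⟨⟨x, hx⟩, h, rfl⟩
    refine Nat.card_congr ((Equiv.subtypeEquivRight (fun s : Finset V => ?_)).trans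
      ((avoidEquiv G w (fun s => x ∈ s) (fun t => ⟨x, hx⟩ ∈ t) hPmem).trans
      (Equiv.subtypeEquivRight fun t => ?_)))
    · tauto
    · tauto

noncomputable def induceInduceIso (G : SimpleGraph V) (S : Set V) (T : Set ↥S) :
    (G.induce S).induce T ≃g G.induce (Subtype.val '' T) where
  toEquiv := Equiv.Set.image Subtype.val T Subtype.val_injective
  map_rel_iff' := Iff.rfl

end Avoid

section Final

theorem main_aux {V : Type*} [Finite V] (H : SimpleGraph V) (u v : V) (huv : H.Adj u v)
    (k1 k2 : ℕ) (pu : u ∈ ({v}ᶜ : Set V)) (pv : v ∈ ({u}ᶜ : Set V)) :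
    numCIS (attachPath (attachPath H u k1) (Sum.inl v) k2) =
      (k1 + 1) * (k2 + 1) * numCISat2 H u v
      + (k1 + 1) * numCISat (H.induce ({v}ᶜ : Set V)) ⟨u, pu⟩
      + (k2 + 1) * numCISat (H.induce ({u}ᶜ : Set V)) ⟨v, pv⟩
      + (k1 + 1).choose 2 + (k2 + 1).choose 2
      + numCIS (H.induce (({u, v}ᶜ : Set V))) := by
  have e1 := numCIS_attachPath k2 (attachPath H u k1) (Sum.inl v)
  have e2 := numCIS_attachPath k1 H u
  have e3 := numCISat_attachPath k1 H u v
  have e4 := numCISat_avoid H u v pu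
  have e5 : numCISat H v = numCISat2 H u v
      + numCISat (H.induce ({u}ᶜ : Set V)) ⟨v, pv⟩ := by
    rw [numCISat_avoid H v u pv, numCISat2_comm]
  have e6 := numCIS_avoid H u
  have e7 := numCIS_avoid (H.induce ({u}ᶜ : Set V)) ⟨v, pv⟩
  have e8 : numCIS ((H.induce ({u}ᶜ : Set V)).induce
      (({⟨v, pv⟩}ᶜ : Set ↥({u}ᶜ : Set V)))) = numCIS (H.induce (({u, v}ᶜ : Set V))) := by
    rw [numCIS_congr (induceInduceIso H ({u}ᶜ : Set V) ({⟨v, pv⟩}ᶜ))]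
    have hset : Subtype.val '' ({⟨v, pv⟩}ᶜ : Set ↥({u}ᶜ : Set V)) = ({u, v}ᶜ : Set V) := by
      ext x
      simp only [Set.mem_image, Set.mem_compl_iff, Set.mem_singleton_iff, Set.mem_insert_iff]
      constructor
      · rintro ⟨⟨y, hy⟩, hne, rfl⟩
        push_neg
        refine ⟨by simpa using hy, fun h => hne (Subtype.ext h)⟩
      · intro hx
        push_neg at hx
        exact ⟨⟨x, by simpa using hx.1⟩, fun h => hx.2 (congrArg Subtype.val h), rfl⟩
    rw [hset]
  rw [e1, e3, e2, e6, e7, e8, e4, e5]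
  ring

end Final


/-- The count of connected induced subgraphs of `H(n1; n2)`, obtained from `H` by
attaching pendant paths of orders `n1` and `n2` at the adjacent vertices `u` and `v`
(each order counts the attachment vertex, so `n1 - 1`, resp. `n2 - 1`, new vertices are
added). -/
theorem numCIS_H_n1_n2 {V : Type*} [Fintype V] (H : SimpleGraph V) (hH : H.Connected)
    (u v : V) (huv : H.Adj u v) (n1 n2 : ℕ) (h1 : 1 ≤ n1) (h2 : 1 ≤ n2) :
    numCIS (attachPath (attachPath H u (n1 - 1)) (Sum.inl v) (n2 - 1)) =
      n1 * n2 * numCISat2 H u v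
      + n1 * numCISat (H.induce ({v}ᶜ : Set V)) ⟨u, by simp [huv.ne]⟩
      + n2 * numCISat (H.induce ({u}ᶜ : Set V)) ⟨v, by simp [huv.ne']⟩
      + n1.choose 2 + n2.choose 2
      + numCIS (H.induce (({u, v}ᶜ : Set V))) := by
  obtain ⟨k1, rfl⟩ : ∃ k, n1 = k + 1 := ⟨n1 - 1, (Nat.succ_pred_eq_of_pos h1).symm⟩
  obtain ⟨k2, rfl⟩ : ∃ k, n2 = k + 1 := ⟨n2 - 1, (Nat.succ_pred_eq_of_pos h2).symm⟩
  exact main_aux H u v huv k1 k2 (by simp [huv.ne]) (by simp [huv.ne'])
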